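/- arXiv:1904.09716 — 3 statements merged into one kernel-verified Lean document; each statement's English description precedes it below -/
import Mathlib

section
/- For all n ≥ 1, β₁, …, βₙ > 0 and x₀, xₙ ∈ ℝ^d, the (n-1)-fold chain integral ∫_{ℝ^d}⋯∫_{ℝ^d} ∏_{i=1}^n exp(-β_i‖x_{i-1}-x_i‖²) dx₁⋯dx_{n-1} equals (π^{n-1}/Σ_{i=1}^n β₁⋯β_{i-1}β_{i+1}⋯βₙ)^{d/2} · exp(-(β₁⋯βₙ/Σ_{i=1}^n β₁⋯β_{i-1}β_{i+1}⋯βₙ)‖x₀-xₙ‖²). -/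
open Finset MeasureTheory Real Filter

local notation "E" d => EuclideanSpace ℝ (Fin d)


-- quadratic decomposition
lemma gci_sq_decomp {d : ℕ} (a b : ℝ) (ha : 0 < a) (hb : 0 < b) (x y z : E d) :
    -a * ‖x - y‖ ^ 2 + -b * ‖y - z‖ ^ 2 =
      -(a + b) * ‖y - ((a / (a + b)) • x + (b / (a + b)) • z)‖ ^ 2
        + -(a * b / (a + b)) * ‖x - z‖ ^ 2 := by
  have hab : a + b ≠ 0 := by positivity
  have h1 : ∀ u v : E d, ‖u - v‖ ^ 2 = ‖u‖ ^ 2 - 2 * inner ℝ u v + ‖v‖ ^ 2 :=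
    fun u v => norm_sub_sq_real u v
  rw [h1 x y, h1 y z, h1 y _, h1 x z]
  rw [norm_add_sq_real, inner_add_right, real_inner_smul_right, real_inner_smul_right,
    norm_smul, norm_smul, real_inner_smul_left, real_inner_smul_right,
    real_inner_comm x y]
  simp only [Real.norm_eq_abs, mul_pow, sq_abs]
  have hxz : (inner ℝ x z : ℝ) = inner ℝ x z := rfl
  field_simp
  ring

lemma gci_gauss_integrable {d : ℕ} {c : ℝ} (hc : 0 < c) :
    Integrable (fun y : E d => rexp (-c * ‖y‖ ^ 2)) := by
  have := (GaussianFourier.integrable_cexp_neg_mul_sq_norm_add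
    (V := E d) (b := (c : ℂ)) (by simpa using hc) 0 0).norm
  refine this.congr (Eventually.of_forall fun y => ?_)
  simp [Complex.norm_exp]
  left; norm_cast

lemma gci_conv {d : ℕ} (a b : ℝ) (ha : 0 < a) (hb : 0 < b) (x z : E d) :
    ∫⁻ y : E d, ENNReal.ofReal (rexp (-a * ‖x - y‖ ^ 2) * rexp (-b * ‖y - z‖ ^ 2)) =
      ENNReal.ofReal ((π / (a + b)) ^ ((d : ℝ) / 2) *
        rexp (-(a * b / (a + b)) * ‖x - z‖ ^ 2)) := by
  have hab : 0 < a + b := by positivity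
  set c : E d := (a / (a + b)) • x + (b / (a + b)) • z with hc
  have key : ∀ y : E d, rexp (-a * ‖x - y‖ ^ 2) * rexp (-b * ‖y - z‖ ^ 2)
      = rexp (-(a + b) * ‖y - c‖ ^ 2) * rexp (-(a * b / (a + b)) * ‖x - z‖ ^ 2) := by
    intro y
    rw [← Real.exp_add, ← Real.exp_add, gci_sq_decomp a b ha hb x y z]
  have hint : Integrable (fun y : E d =>
      rexp (-a * ‖x - y‖ ^ 2) * rexp (-b * ‖y - z‖ ^ 2)) := by
    simp only [key]
    exact ((gci_gauss_integrable hab).comp_sub_right c).mul_const _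
  rw [← ofReal_integral_eq_lintegral_ofReal hint
    (Eventually.of_forall fun y => by positivity)]
  congr 1
  simp only [key]
  rw [integral_mul_const]
  have : (∫ y : E d, rexp (-(a + b) * ‖y - c‖ ^ 2)) = (π / (a + b)) ^ ((d : ℝ) / 2) := by
    rw [integral_sub_right_eq_self (fun y : E d => rexp (-(a + b) * ‖y‖ ^ 2)) c]
    rw [GaussianFourier.integral_rexp_neg_mul_sq_norm hab]
    congr 1
    simp [finrank_euclideanSpace]
  rw [this]

lemma gci_S_eq (m : ℕ) (β : ℕ → ℝ) (hβ : ∀ i < m, β i ≠ 0) :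
    ∑ i ∈ range m, ∏ j ∈ (range m).erase i, β j =
      (∏ j ∈ range m, β j) * ∑ i ∈ range m, (β i)⁻¹ := by
  rw [Finset.mul_sum]
  refine Finset.sum_congr rfl fun i hi => ?_
  have hne : β i ≠ 0 := hβ i (mem_range.mp hi)
  field_simp
  rw [mul_comm]
  exact Finset.mul_prod_erase _ _ hi

lemma gci_S_pos (m : ℕ) (hm : 1 ≤ m) (β : ℕ → ℝ) (hβ : ∀ i < m, 0 < β i) :
    0 < ∑ i ∈ range m, ∏ j ∈ (range m).erase i, β j := by
  rw [gci_S_eq m β (fun i hi => (hβ i hi).ne')]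
  have h1 : 0 < ∏ j ∈ range m, β j :=
    Finset.prod_pos fun j hj => hβ j (mem_range.mp hj)
  have h2 : 0 < ∑ i ∈ range m, (β i)⁻¹ := by
    apply Finset.sum_pos (fun i hi => by
      exact inv_pos.mpr (hβ i (mem_range.mp hi)))
    exact nonempty_range_iff.mpr (by omega)
  positivity

lemma gci_lt {n j : ℕ} (hj : 1 ≤ j ∧ j < n) : j - 1 < n - 1 := by omega

lemma gci_meas_chain {d n : ℕ} (x₀ xₙ : E d) (j : ℕ) :
    Measurable (fun z : Fin (n - 1) → E d =>
      if hj : 1 ≤ j ∧ j < n then z ⟨j - 1, gci_lt hj⟩ else if j = 0 then x₀ else xₙ) := by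
  by_cases hj : 1 ≤ j ∧ j < n
  · simp only [dif_pos hj]; exact measurable_pi_apply _
  · simp only [dif_neg hj]; exact measurable_const

lemma gci_meas_real {d n : ℕ} (β : ℕ → ℝ) (x₀ xₙ : E d) :
    Measurable (fun z : Fin (n - 1) → E d => (∏ i ∈ range n,
      rexp (-(β i) *
        ‖(fun j : ℕ => if hj : 1 ≤ j ∧ j < n then z ⟨j - 1, gci_lt hj⟩
            else if j = 0 then x₀ else xₙ) i -
          (fun j : ℕ => if hj : 1 ≤ j ∧ j < n then z ⟨j - 1, gci_lt hj⟩
            else if j = 0 then x₀ else xₙ) (i + 1)‖ ^ 2))) := by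
  apply Finset.measurable_prod
  intro i _
  apply Real.measurable_exp.comp
  apply Measurable.const_mul
  exact ((gci_meas_chain x₀ xₙ i).sub (gci_meas_chain x₀ xₙ (i + 1))).norm.pow measurable_const

lemma gci_meas_integrand {d n : ℕ} (β : ℕ → ℝ) (x₀ xₙ : E d) :
    Measurable (fun z : Fin (n - 1) → E d => ENNReal.ofReal (∏ i ∈ range n,
      rexp (-(β i) *
        ‖(fun j : ℕ => if hj : 1 ≤ j ∧ j < n then z ⟨j - 1, gci_lt hj⟩
            else if j = 0 then x₀ else xₙ) i -
          (fun j : ℕ => if hj : 1 ≤ j ∧ j < n then z ⟨j - 1, gci_lt hj⟩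
            else if j = 0 then x₀ else xₙ) (i + 1)‖ ^ 2))) :=
  (gci_meas_real β x₀ xₙ).ennreal_ofReal

set_option maxHeartbeats 1000000 in
lemma gci_chain (d : ℕ) (n : ℕ) (hn : 1 ≤ n) : ∀ (β : ℕ → ℝ), (∀ i < n, 0 < β i) →
    ∀ x₀ xₙ : E d,
    ∫⁻ z : Fin (n - 1) → E d, ENNReal.ofReal (∏ i ∈ range n,
      rexp (-(β i) *
        ‖(fun j : ℕ => if hj : 1 ≤ j ∧ j < n then z ⟨j - 1, gci_lt hj⟩
            else if j = 0 then x₀ else xₙ) i -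
          (fun j : ℕ => if hj : 1 ≤ j ∧ j < n then z ⟨j - 1, gci_lt hj⟩
            else if j = 0 then x₀ else xₙ) (i + 1)‖ ^ 2)) =
    ENNReal.ofReal ((π ^ (n - 1) / ∑ i ∈ range n, ∏ j ∈ (range n).erase i, β j) ^ ((d : ℝ) / 2) *
      rexp (-((∏ j ∈ range n, β j) / ∑ i ∈ range n, ∏ j ∈ (range n).erase i, β j) *
        ‖x₀ - xₙ‖ ^ 2)) := by
  induction n, hn using Nat.le_induction with
  | base =>
    intro β hβ x₀ xₙ
    simp only [prod_range_one, sum_range_one, erase_singleton, prod_empty, pow_zero, div_one,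
      Real.one_rpow, one_mul]
    norm_num
    have : (volume : Measure (Fin (1-1) → E d)) Set.univ = 1 := by
      rw [volume_pi, Measure.pi_univ]; simp
    rw [this, mul_one]
  | succ n hn IH =>
    intro β hβ x₀ xₙ
    obtain ⟨m, rfl⟩ : ∃ m, n = m + 1 := ⟨n - 1, by omega⟩
    have ha : 0 < β m := hβ m (by omega)
    have hb : 0 < β (m + 1) := hβ (m + 1) (by omega)
    have hab : 0 < β m + β (m + 1) := by positivity
    set γ : ℕ → ℝ := fun i => if i = m then β m * β (m + 1) / (β m + β (m + 1)) else β i with hγ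
    have hγpos : ∀ i < m + 1, 0 < γ i := by
      intro i hi
      by_cases h : i = m
      · simp only [hγ, if_pos h]; positivity
      · simp only [hγ, if_neg h]; exact hβ i (by omega)
    show (∫⁻ z : Fin (m + 1) → E d, ENNReal.ofReal (∏ i ∈ range (m + 2),
        rexp (-(β i) *
          ‖(fun j : ℕ => if hj : 1 ≤ j ∧ j < m + 2 then z ⟨j - 1, by omega⟩
              else if j = 0 then x₀ else xₙ) i -
            (fun j : ℕ => if hj : 1 ≤ j ∧ j < m + 2 then z ⟨j - 1, by omega⟩
              else if j = 0 then x₀ else xₙ) (i + 1)‖ ^ 2))) =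
      ENNReal.ofReal ((π ^ (m + 1) / ∑ i ∈ range (m + 2), ∏ j ∈ (range (m + 2)).erase i, β j) ^
          ((d : ℝ) / 2) *
        rexp (-((∏ j ∈ range (m + 2), β j) /
            ∑ i ∈ range (m + 2), ∏ j ∈ (range (m + 2)).erase i, β j) * ‖x₀ - xₙ‖ ^ 2))
    -- transfer to product measure
    have hmeas := gci_meas_integrand (d := d) (n := m + 2) β x₀ xₙ
    have mp := (MeasureTheory.volume_preserving_piFinSuccAbove
      (fun _ : Fin (m + 1) => E d) (Fin.last m)).symm
    rw [← mp.lintegral_comp hmeas]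
    have hf : Measurable fun p : (E d) × (Fin m → E d) =>
        ENNReal.ofReal (∏ i ∈ range (m + 2),
          rexp (-(β i) *
            ‖(fun j : ℕ => if hj : 1 ≤ j ∧ j < m + 2 then
                  (MeasurableEquiv.piFinSuccAbove (fun _ : Fin (m + 1) => E d)
                    (Fin.last m)).symm p ⟨j - 1, by omega⟩
                else if j = 0 then x₀ else xₙ) i -
              (fun j : ℕ => if hj : 1 ≤ j ∧ j < m + 2 then
                  (MeasurableEquiv.piFinSuccAbove (fun _ : Fin (m + 1) => E d)
                    (Fin.last m)).symm p ⟨j - 1, by omega⟩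
                else if j = 0 then x₀ else xₙ) (i + 1)‖ ^ 2)) :=
      hmeas.comp (MeasurableEquiv.measurable _)
    rw [Measure.volume_eq_prod, lintegral_prod_symm' _ hf]
    have hes : ∀ (y : E d) (w : Fin m → E d),
        (MeasurableEquiv.piFinSuccAbove (fun _ : Fin (m + 1) => E d) (Fin.last m)).symm (y, w)
          = Fin.snoc w y := by
      intro y w
      simp [MeasurableEquiv.piFinSuccAbove, Fin.insertNthEquiv]
    simp only [hes]
    have hsnoc_lt : ∀ (w : Fin m → E d) (y : E d) (j : ℕ) (hj : 1 ≤ j ∧ j < m + 1),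
        (Fin.snoc w y : Fin (m + 1) → E d) ⟨j - 1, by omega⟩ = w ⟨j - 1, by omega⟩ := by
      intro w y j hj
      have h : (⟨j - 1, by omega⟩ : Fin (m + 1)) = Fin.castSucc ⟨j - 1, by omega⟩ := rfl
      rw [h, Fin.snoc_castSucc]
    have hsnoc_last : ∀ (w : Fin m → E d) (y : E d),
        (Fin.snoc w y : Fin (m + 1) → E d) ⟨m + 1 - 1, by omega⟩ = y := by
      intro w y
      have h : (⟨m + 1 - 1, by omega⟩ : Fin (m + 1)) = Fin.last m := by
        ext; simp
      rw [h, Fin.snoc_last]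
    have key : ∀ (y : E d) (w : Fin m → E d),
        (∏ i ∈ range (m + 2), rexp (-(β i) *
          ‖(if hj : 1 ≤ i ∧ i < m + 2 then (Fin.snoc w y : Fin (m + 1) → E d) ⟨i - 1, by omega⟩
              else if i = 0 then x₀ else xₙ) -
            (if hj : 1 ≤ i + 1 ∧ i + 1 < m + 2 then
                (Fin.snoc w y : Fin (m + 1) → E d) ⟨i + 1 - 1, by omega⟩
              else if i + 1 = 0 then x₀ else xₙ)‖ ^ 2))
        = (∏ i ∈ range m, rexp (-(γ i) *
            ‖(if hj : 1 ≤ i ∧ i < m + 1 then w ⟨i - 1, by omega⟩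
                else if i = 0 then x₀ else xₙ) -
              (if hj : 1 ≤ i + 1 ∧ i + 1 < m + 1 then w ⟨i + 1 - 1, by omega⟩
                else if i + 1 = 0 then x₀ else xₙ)‖ ^ 2)) *
          (rexp (-(β m) *
            ‖(if hj : 1 ≤ m ∧ m < m + 1 then w ⟨m - 1, by omega⟩
                else if m = 0 then x₀ else xₙ) - y‖ ^ 2) *
           rexp (-(β (m + 1)) * ‖y - xₙ‖ ^ 2)) := by
      intro y w
      rw [prod_range_succ, prod_range_succ]
      have hch : ∀ j : ℕ, j ≤ m →
          (if hj : 1 ≤ j ∧ j < m + 2 then (Fin.snoc w y : Fin (m + 1) → E d) ⟨j - 1, by omega⟩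
            else if j = 0 then x₀ else xₙ)
          = (if hj : 1 ≤ j ∧ j < m + 1 then w ⟨j - 1, by omega⟩
            else if j = 0 then x₀ else xₙ) := by
        intro j hjm
        by_cases h1 : 1 ≤ j
        · rw [dif_pos (⟨h1, by omega⟩ : 1 ≤ j ∧ j < m + 2),
            dif_pos (⟨h1, by omega⟩ : 1 ≤ j ∧ j < m + 1)]
          exact hsnoc_lt w y j ⟨h1, by omega⟩
        · rw [dif_neg (by omega), dif_neg (by omega)]
      have hlast1 : (if hj : 1 ≤ m + 1 ∧ m + 1 < m + 2 then
            (Fin.snoc w y : Fin (m + 1) → E d) ⟨m + 1 - 1, by omega⟩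
          else if m + 1 = 0 then x₀ else xₙ) = y := by
        rw [dif_pos (⟨by omega, by omega⟩ : 1 ≤ m + 1 ∧ m + 1 < m + 2)]
        exact hsnoc_last w y
      have hlast2 : (if hj : 1 ≤ m + 2 ∧ m + 2 < m + 2 then
            (Fin.snoc w y : Fin (m + 1) → E d) ⟨m + 2 - 1, by omega⟩
          else if m + 2 = 0 then x₀ else xₙ) = xₙ := by
        rw [dif_neg (by omega)]; norm_num
      rw [mul_assoc]
      congr 1
      · refine Finset.prod_congr rfl fun i hi => ?_
        have him : i < m := mem_range.mp hi
        rw [hch i (by omega), hch (i + 1) (by omega),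
          show γ i = β i from if_neg (by omega)]
      · congr 1
        · rw [hch m le_rfl, hlast1]
        · rw [hlast1, hlast2]
    simp only [key]
    have hA : ∀ w : Fin m → E d, 0 ≤ ∏ i ∈ range m, rexp (-(γ i) *
        ‖(if hj : 1 ≤ i ∧ i < m + 1 then w ⟨i - 1, by omega⟩
            else if i = 0 then x₀ else xₙ) -
          (if hj : 1 ≤ i + 1 ∧ i + 1 < m + 1 then w ⟨i + 1 - 1, by omega⟩
            else if i + 1 = 0 then x₀ else xₙ)‖ ^ 2) :=
      fun w => Finset.prod_nonneg fun i _ => (Real.exp_pos _).le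
    have hKpos : (0:ℝ) ≤ (π / (β m + β (m + 1))) ^ ((d : ℝ) / 2) := by positivity
    have inner_eq : ∀ w : Fin m → E d,
        (∫⁻ y : E d, ENNReal.ofReal ((∏ i ∈ range m, rexp (-(γ i) *
          ‖(if hj : 1 ≤ i ∧ i < m + 1 then w ⟨i - 1, by omega⟩
              else if i = 0 then x₀ else xₙ) -
            (if hj : 1 ≤ i + 1 ∧ i + 1 < m + 1 then w ⟨i + 1 - 1, by omega⟩
              else if i + 1 = 0 then x₀ else xₙ)‖ ^ 2)) *
          (rexp (-(β m) *
            ‖(if hj : 1 ≤ m ∧ m < m + 1 then w ⟨m - 1, by omega⟩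
                else if m = 0 then x₀ else xₙ) - y‖ ^ 2) *
           rexp (-(β (m + 1)) * ‖y - xₙ‖ ^ 2))))
        = ENNReal.ofReal ((π / (β m + β (m + 1))) ^ ((d : ℝ) / 2)) *
          ENNReal.ofReal (∏ i ∈ range (m + 1), rexp (-(γ i) *
            ‖(if hj : 1 ≤ i ∧ i < m + 1 then w ⟨i - 1, by omega⟩
                else if i = 0 then x₀ else xₙ) -
              (if hj : 1 ≤ i + 1 ∧ i + 1 < m + 1 then w ⟨i + 1 - 1, by omega⟩
                else if i + 1 = 0 then x₀ else xₙ)‖ ^ 2)) := by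
      intro w
      simp_rw [ENNReal.ofReal_mul (hA w)]
      rw [lintegral_const_mul _ (by
        apply Measurable.ennreal_ofReal
        apply Measurable.mul
        · apply Real.measurable_exp.comp
          apply Measurable.const_mul
          exact (measurable_const.sub measurable_id).norm.pow measurable_const
        · apply Real.measurable_exp.comp
          apply Measurable.const_mul
          exact ((measurable_id.sub measurable_const)).norm.pow measurable_const)]
      rw [gci_conv (β m) (β (m + 1)) ha hb _ xₙ]
      rw [← ENNReal.ofReal_mul (hA w), ← ENNReal.ofReal_mul hKpos]
      congr 1
      rw [prod_range_succ]
      rw [show (if hj : 1 ≤ m + 1 ∧ m + 1 < m + 1 then w ⟨m + 1 - 1, by omega⟩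
          else if m + 1 = 0 then x₀ else xₙ) = xₙ by rw [dif_neg (by omega)]; norm_num]
      rw [show γ m = β m * β (m + 1) / (β m + β (m + 1)) from if_pos rfl]
      ring
    simp only [inner_eq]
    have measγ : Measurable fun w : Fin m → E d =>
        ENNReal.ofReal (∏ i ∈ range (m + 1), rexp (-(γ i) *
          ‖(if hj : 1 ≤ i ∧ i < m + 1 then w ⟨i - 1, by omega⟩
              else if i = 0 then x₀ else xₙ) -
            (if hj : 1 ≤ i + 1 ∧ i + 1 < m + 1 then w ⟨i + 1 - 1, by omega⟩
              else if i + 1 = 0 then x₀ else xₙ)‖ ^ 2)) :=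
      gci_meas_integrand (d := d) (n := m + 1) γ x₀ xₙ
    rw [lintegral_const_mul _ measγ]
    have IH2 : (∫⁻ w : Fin m → E d,
        ENNReal.ofReal (∏ i ∈ range (m + 1), rexp (-(γ i) *
          ‖(if hj : 1 ≤ i ∧ i < m + 1 then w ⟨i - 1, by omega⟩
              else if i = 0 then x₀ else xₙ) -
            (if hj : 1 ≤ i + 1 ∧ i + 1 < m + 1 then w ⟨i + 1 - 1, by omega⟩
              else if i + 1 = 0 then x₀ else xₙ)‖ ^ 2)))
        = ENNReal.ofReal ((π ^ m / ∑ i ∈ range (m + 1), ∏ j ∈ (range (m + 1)).erase i, γ j) ^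
            ((d : ℝ) / 2) *
          rexp (-((∏ j ∈ range (m + 1), γ j) /
              ∑ i ∈ range (m + 1), ∏ j ∈ (range (m + 1)).erase i, γ j) * ‖x₀ - xₙ‖ ^ 2)) :=
      IH γ hγpos x₀ xₙ
    rw [IH2]
    have hS'pos : 0 < ∑ i ∈ range (m + 1), ∏ j ∈ (range (m + 1)).erase i, γ j :=
      gci_S_pos _ (by omega) γ hγpos
    have hγm : γ m = β m * β (m + 1) / (β m + β (m + 1)) := if_pos rfl
    have h1γ : ∏ i ∈ range m, γ i = ∏ i ∈ range m, β i :=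
      Finset.prod_congr rfl fun i hi => if_neg (by have := mem_range.mp hi; omega)
    have h2γ : ∑ i ∈ range m, (γ i)⁻¹ = ∑ i ∈ range m, (β i)⁻¹ :=
      Finset.sum_congr rfl fun i hi =>
        congrArg Inv.inv (if_neg (by have := mem_range.mp hi; omega))
    have hSeq : ∑ i ∈ range (m + 2), ∏ j ∈ (range (m + 2)).erase i, β j
        = (β m + β (m + 1)) * ∑ i ∈ range (m + 1), ∏ j ∈ (range (m + 1)).erase i, γ j := by
      rw [gci_S_eq _ β (fun i hi => (hβ i (by omega)).ne'),
        gci_S_eq _ γ (fun i hi => (hγpos i hi).ne')]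
      simp only [show m + 2 = m + 1 + 1 from rfl, prod_range_succ, sum_range_succ, h1γ, h2γ, hγm]
      have hB : (β m * β (m + 1) / (β m + β (m + 1)))⁻¹ = (β m)⁻¹ + (β (m + 1))⁻¹ := by
        field_simp
        ring
      rw [hB]
      field_simp
      ring
    have hPeq : ∏ j ∈ range (m + 2), β j
        = (β m + β (m + 1)) * ∏ j ∈ range (m + 1), γ j := by
      simp only [show m + 2 = m + 1 + 1 from rfl, prod_range_succ, h1γ, hγm]
      field_simp
    rw [← ENNReal.ofReal_mul hKpos]
    congr 1
    rw [hSeq, hPeq, mul_div_mul_left _ _ (ne_of_gt hab), ← mul_assoc]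
    congr 1
    rw [← Real.mul_rpow (by positivity) (by positivity)]
    congr 1
    rw [pow_succ]
    field_simp

/-- Lemma 5.2 of the paper: the `(n-1)`-fold Gaussian chain integral. -/
theorem gaussian_chain_integral (d n : ℕ) (hn : 1 ≤ n) (β : ℕ → ℝ)
    (hβ : ∀ i < n, 0 < β i) (x₀ xₙ : EuclideanSpace ℝ (Fin d)) :
    (∫ z : Fin (n - 1) → EuclideanSpace ℝ (Fin d),
        ∏ i ∈ range n,
          Real.exp (-(β i) *
            ‖(fun j : ℕ => if hj : 1 ≤ j ∧ j < n then z ⟨j - 1, by omega⟩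
                else if j = 0 then x₀ else xₙ) i -
             (fun j : ℕ => if hj : 1 ≤ j ∧ j < n then z ⟨j - 1, by omega⟩
                else if j = 0 then x₀ else xₙ) (i + 1)‖ ^ 2)) =
      (Real.pi ^ (n - 1) / ∑ i ∈ range n, ∏ j ∈ (range n).erase i, β j) ^ ((d : ℝ) / 2) *
        Real.exp (-((∏ j ∈ range n, β j) /
            ∑ i ∈ range n, ∏ j ∈ (range n).erase i, β j) * ‖x₀ - xₙ‖ ^ 2) := by
  have hS : 0 < ∑ i ∈ range n, ∏ j ∈ (range n).erase i, β j := gci_S_pos n hn β hβ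
  rw [MeasureTheory.integral_eq_lintegral_of_nonneg_ae
    (Filter.Eventually.of_forall fun z => Finset.prod_nonneg fun i _ => (Real.exp_pos _).le)
    (gci_meas_real β x₀ xₙ).aestronglyMeasurable]
  rw [gci_chain d n hn β hβ x₀ xₙ]
  rw [ENNReal.toReal_ofReal]
  exact mul_nonneg (Real.rpow_nonneg (div_nonneg (pow_nonneg Real.pi_nonneg _) hS.le) _)
    (Real.exp_pos _).le
end

section
/- For β > 0 and x, y ∈ ℝ^d, the double integral ∫_{ℝ^d}∫_{ℝ^d} exp(-β‖x-z₁‖²)·exp(-β‖z₁-z₂‖²)·exp(-β‖z₂-y‖²)·exp(-β‖x-z₂‖²)·exp(-β‖z₁-y‖²) dz₁ dz₂ equals (π²/(8β²))^{d/2} exp(-β‖x-y‖²). -/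
open MeasureTheory Real

section Aux

variable {d : ℕ}

private lemma key' {F : Type*} [NormedAddCommGroup F] [InnerProductSpace ℝ F]
    (a b : ℝ) (hab : a + b ≠ 0) (x y z : F) :
    a * ‖x - z‖ ^ 2 + b * ‖z - y‖ ^ 2 =
      (a + b) * ‖z - (a + b)⁻¹ • (a • x + b • y)‖ ^ 2 + (a * b / (a + b)) * ‖x - y‖ ^ 2 := by
  simp only [norm_sub_sq_real, norm_add_sq_real, norm_smul, inner_smul_left, inner_smul_right,
    inner_add_left, inner_add_right, real_inner_self_eq_norm_sq,
    RCLike.conj_to_real, Real.norm_eq_abs, mul_pow, sq_abs]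
  rw [real_inner_comm x z]
  field_simp
  ring

private lemma gauss_int (b : ℝ) (hb : 0 < b) (c : EuclideanSpace ℝ (Fin d)) :
    ∫ z : EuclideanSpace ℝ (Fin d), Real.exp (-b * ‖z - c‖ ^ 2) = (π / b) ^ ((d : ℝ) / 2) := by
  rw [integral_sub_right_eq_self (fun z : EuclideanSpace ℝ (Fin d) => Real.exp (-b * ‖z‖ ^ 2)) c,
    GaussianFourier.integral_rexp_neg_mul_sq_norm hb]
  simp [finrank_euclideanSpace]

private lemma gauss_conv (a b : ℝ) (ha : 0 < a) (hb : 0 < b) (x y : EuclideanSpace ℝ (Fin d)) :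
    ∫ z : EuclideanSpace ℝ (Fin d), Real.exp (-a * ‖x - z‖ ^ 2) * Real.exp (-b * ‖z - y‖ ^ 2) =
      (π / (a + b)) ^ ((d : ℝ) / 2) * Real.exp (-(a * b / (a + b)) * ‖x - y‖ ^ 2) := by
  have hab : (0:ℝ) < a + b := by linarith
  have h1 : ∀ z : EuclideanSpace ℝ (Fin d),
      Real.exp (-a * ‖x - z‖ ^ 2) * Real.exp (-b * ‖z - y‖ ^ 2) =
      Real.exp (-(a + b) * ‖z - (a + b)⁻¹ • (a • x + b • y)‖ ^ 2) *
        Real.exp (-(a * b / (a + b)) * ‖x - y‖ ^ 2) := by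
    intro z
    rw [← Real.exp_add, ← Real.exp_add]
    congr 1
    have hk := key' a b hab.ne' x y z
    nlinarith [hk]
  simp_rw [h1]
  rw [integral_mul_const, gauss_int (a + b) hab]

private lemma gauss_integrable (b : ℝ) (hb : 0 < b) (c : EuclideanSpace ℝ (Fin d)) :
    Integrable (fun z : EuclideanSpace ℝ (Fin d) => Real.exp (-b * ‖c - z‖ ^ 2)) := by
  have h0 : Integrable (fun z : EuclideanSpace ℝ (Fin d) => Real.exp (-b * ‖z‖ ^ 2)) := by
    have h := (GaussianFourier.integrable_cexp_neg_mul_sq_norm_add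
      (V := EuclideanSpace ℝ (Fin d)) (b := (b : ℂ)) (by simpa using hb) 0 0).norm
    simpa [Complex.norm_exp, ← Complex.ofReal_pow] using h
  have := h0.comp_sub_right c
  simpa [norm_sub_rev] using this

end Aux

/-- The crossing term in the variance of the `3`-hop count (proof of Corollary 5.3):
`∫∫ H_β(x,z₁)H_β(z₁,z₂)H_β(z₂,y)H_β(x,z₂)H_β(z₁,y) dz₁dz₂ = (π²/(8β²))^{d/2} e^{-β‖x-y‖²}`. -/
theorem hop3_crossing_integral (d : ℕ) (β : ℝ) (hβ : 0 < β)
    (x y : EuclideanSpace ℝ (Fin d)) :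
    ∫ z : EuclideanSpace ℝ (Fin d) × EuclideanSpace ℝ (Fin d),
        Real.exp (-β * ‖x - z.1‖ ^ 2) * Real.exp (-β * ‖z.1 - z.2‖ ^ 2) *
          Real.exp (-β * ‖z.2 - y‖ ^ 2) * Real.exp (-β * ‖x - z.2‖ ^ 2) *
          Real.exp (-β * ‖z.1 - y‖ ^ 2) =
      (Real.pi ^ 2 / (8 * β ^ 2)) ^ ((d : ℝ) / 2) * Real.exp (-β * ‖x - y‖ ^ 2) := by
  set m : EuclideanSpace ℝ (Fin d) := (β + β)⁻¹ • (β • x + β • y) with hm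
  have hββ : β + β ≠ 0 := by positivity
  -- the basic pairing identity
  have pair : ∀ z : EuclideanSpace ℝ (Fin d), Real.exp (-β * ‖x - z‖ ^ 2) * Real.exp (-β * ‖z - y‖ ^ 2) =
      Real.exp (-(2 * β) * ‖z - m‖ ^ 2) * Real.exp (-(β / 2) * ‖x - y‖ ^ 2) := by
    intro z
    rw [← Real.exp_add, ← Real.exp_add]
    congr 1
    have hk := key' β β hββ x y z
    have h2 : β * β / (β + β) = β / 2 := by field_simp; ring
    rw [h2] at hk
    nlinarith [hk]
  -- integrability on the product space
  have hg : Integrable (fun z : EuclideanSpace ℝ (Fin d) => Real.exp (-β * ‖x - z‖ ^ 2)) := gauss_integrable β hβ x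
  have hh : Integrable (fun z : EuclideanSpace ℝ (Fin d) => Real.exp (-β * ‖z - y‖ ^ 2)) := by
    simpa [norm_sub_rev] using gauss_integrable β hβ y
  have hint : Integrable (fun z : EuclideanSpace ℝ (Fin d) × EuclideanSpace ℝ (Fin d) =>
      Real.exp (-β * ‖x - z.1‖ ^ 2) * Real.exp (-β * ‖z.1 - z.2‖ ^ 2) *
        Real.exp (-β * ‖z.2 - y‖ ^ 2) * Real.exp (-β * ‖x - z.2‖ ^ 2) *
        Real.exp (-β * ‖z.1 - y‖ ^ 2)) (volume.prod volume) := by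
    have hGH : Integrable (fun z : EuclideanSpace ℝ (Fin d) × EuclideanSpace ℝ (Fin d) =>
        Real.exp (-β * ‖x - z.1‖ ^ 2) * Real.exp (-β * ‖z.2 - y‖ ^ 2)) (volume.prod volume) :=
      hg.mul_prod hh
    refine hGH.mono ?_ ?_
    · apply Continuous.aestronglyMeasurable
      fun_prop
    · filter_upwards with z
      have e1 : (0:ℝ) < Real.exp (-β * ‖x - z.1‖ ^ 2) := Real.exp_pos _
      have e2 : Real.exp (-β * ‖z.1 - z.2‖ ^ 2) ≤ 1 := by
        rw [Real.exp_le_one_iff]; nlinarith [sq_nonneg ‖z.1 - z.2‖]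
      have e3 : (0:ℝ) < Real.exp (-β * ‖z.2 - y‖ ^ 2) := Real.exp_pos _
      have e4 : Real.exp (-β * ‖x - z.2‖ ^ 2) ≤ 1 := by
        rw [Real.exp_le_one_iff]; nlinarith [sq_nonneg ‖x - z.2‖]
      have e5 : Real.exp (-β * ‖z.1 - y‖ ^ 2) ≤ 1 := by
        rw [Real.exp_le_one_iff]; nlinarith [sq_nonneg ‖z.1 - y‖]
      have e2' := Real.exp_pos (-β * ‖z.1 - z.2‖ ^ 2)
      have e4' := Real.exp_pos (-β * ‖x - z.2‖ ^ 2)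
      have e5' := Real.exp_pos (-β * ‖z.1 - y‖ ^ 2)
      rw [Real.norm_eq_abs, Real.norm_eq_abs, abs_of_pos (by positivity), abs_of_pos (by positivity)]
      calc Real.exp (-β * ‖x - z.1‖ ^ 2) * Real.exp (-β * ‖z.1 - z.2‖ ^ 2) *
            Real.exp (-β * ‖z.2 - y‖ ^ 2) * Real.exp (-β * ‖x - z.2‖ ^ 2) *
            Real.exp (-β * ‖z.1 - y‖ ^ 2)
          = (Real.exp (-β * ‖x - z.1‖ ^ 2) * Real.exp (-β * ‖z.2 - y‖ ^ 2)) *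
            (Real.exp (-β * ‖z.1 - z.2‖ ^ 2) * Real.exp (-β * ‖x - z.2‖ ^ 2) *
              Real.exp (-β * ‖z.1 - y‖ ^ 2)) := by ring
        _ ≤ (Real.exp (-β * ‖x - z.1‖ ^ 2) * Real.exp (-β * ‖z.2 - y‖ ^ 2)) * 1 :=
            mul_le_mul_of_nonneg_left
              (mul_le_one₀ (mul_le_one₀ e2 e4'.le e4) e5'.le e5) (by positivity)
        _ = Real.exp (-β * ‖x - z.1‖ ^ 2) * Real.exp (-β * ‖z.2 - y‖ ^ 2) := mul_one _
  rw [MeasureTheory.Measure.volume_eq_prod, integral_prod _ hint]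
  have h3β : (0:ℝ) < β + 2 * β := by linarith
  -- inner integral over z₂
  have inner_eq : ∀ z₁ : EuclideanSpace ℝ (Fin d),
      (∫ z₂ : EuclideanSpace ℝ (Fin d), Real.exp (-β * ‖x - z₁‖ ^ 2) * Real.exp (-β * ‖z₁ - z₂‖ ^ 2) *
          Real.exp (-β * ‖z₂ - y‖ ^ 2) * Real.exp (-β * ‖x - z₂‖ ^ 2) *
          Real.exp (-β * ‖z₁ - y‖ ^ 2)) =
      (Real.exp (-β * ‖x - z₁‖ ^ 2) * Real.exp (-β * ‖z₁ - y‖ ^ 2) *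
          Real.exp (-(β / 2) * ‖x - y‖ ^ 2)) *
        ((π / (β + 2 * β)) ^ ((d : ℝ) / 2) *
          Real.exp (-(β * (2 * β) / (β + 2 * β)) * ‖z₁ - m‖ ^ 2)) := by
    intro z₁
    have hpt : ∀ z₂ : EuclideanSpace ℝ (Fin d), Real.exp (-β * ‖x - z₁‖ ^ 2) * Real.exp (-β * ‖z₁ - z₂‖ ^ 2) *
        Real.exp (-β * ‖z₂ - y‖ ^ 2) * Real.exp (-β * ‖x - z₂‖ ^ 2) *
        Real.exp (-β * ‖z₁ - y‖ ^ 2) =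
        (Real.exp (-β * ‖x - z₁‖ ^ 2) * Real.exp (-β * ‖z₁ - y‖ ^ 2) *
          Real.exp (-(β / 2) * ‖x - y‖ ^ 2)) *
        (Real.exp (-β * ‖z₁ - z₂‖ ^ 2) * Real.exp (-(2 * β) * ‖z₂ - m‖ ^ 2)) := by
      intro z₂
      have hp := pair z₂
      calc Real.exp (-β * ‖x - z₁‖ ^ 2) * Real.exp (-β * ‖z₁ - z₂‖ ^ 2) *
            Real.exp (-β * ‖z₂ - y‖ ^ 2) * Real.exp (-β * ‖x - z₂‖ ^ 2) *
            Real.exp (-β * ‖z₁ - y‖ ^ 2)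
          = Real.exp (-β * ‖x - z₁‖ ^ 2) * Real.exp (-β * ‖z₁ - z₂‖ ^ 2) *
            Real.exp (-β * ‖z₁ - y‖ ^ 2) *
            (Real.exp (-β * ‖x - z₂‖ ^ 2) * Real.exp (-β * ‖z₂ - y‖ ^ 2)) := by ring
        _ = _ := by rw [hp]; ring
    simp_rw [hpt]
    rw [integral_const_mul, gauss_conv β (2 * β) hβ (by positivity) z₁ m]
  simp_rw [inner_eq]
  -- pointwise simplification of the outer integrand
  have outer_pt : ∀ z₁ : EuclideanSpace ℝ (Fin d),
      (Real.exp (-β * ‖x - z₁‖ ^ 2) * Real.exp (-β * ‖z₁ - y‖ ^ 2) *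
          Real.exp (-(β / 2) * ‖x - y‖ ^ 2)) *
        ((π / (β + 2 * β)) ^ ((d : ℝ) / 2) *
          Real.exp (-(β * (2 * β) / (β + 2 * β)) * ‖z₁ - m‖ ^ 2)) =
      ((π / (β + 2 * β)) ^ ((d : ℝ) / 2) * Real.exp (-β * ‖x - y‖ ^ 2)) *
        Real.exp (-(8 * β / 3) * ‖z₁ - m‖ ^ 2) := by
    intro z₁
    rw [pair z₁]
    have : Real.exp (-(2 * β) * ‖z₁ - m‖ ^ 2) * Real.exp (-(β / 2) * ‖x - y‖ ^ 2) *
        Real.exp (-(β / 2) * ‖x - y‖ ^ 2) * Real.exp (-(β * (2 * β) / (β + 2 * β)) * ‖z₁ - m‖ ^ 2) =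
        Real.exp (-β * ‖x - y‖ ^ 2) * Real.exp (-(8 * β / 3) * ‖z₁ - m‖ ^ 2) := by
      rw [← Real.exp_add, ← Real.exp_add, ← Real.exp_add, ← Real.exp_add]
      congr 1
      field_simp
      ring
    calc Real.exp (-(2 * β) * ‖z₁ - m‖ ^ 2) * Real.exp (-(β / 2) * ‖x - y‖ ^ 2) *
          Real.exp (-(β / 2) * ‖x - y‖ ^ 2) *
          ((π / (β + 2 * β)) ^ ((d : ℝ) / 2) *
            Real.exp (-(β * (2 * β) / (β + 2 * β)) * ‖z₁ - m‖ ^ 2))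
        = (π / (β + 2 * β)) ^ ((d : ℝ) / 2) *
          (Real.exp (-(2 * β) * ‖z₁ - m‖ ^ 2) * Real.exp (-(β / 2) * ‖x - y‖ ^ 2) *
            Real.exp (-(β / 2) * ‖x - y‖ ^ 2) *
            Real.exp (-(β * (2 * β) / (β + 2 * β)) * ‖z₁ - m‖ ^ 2)) := by ring
      _ = _ := by rw [this]; ring
  simp_rw [outer_pt]
  rw [integral_const_mul, gauss_int (8 * β / 3) (by positivity) m]
  rw [mul_comm ((π / (β + 2 * β)) ^ ((d : ℝ) / 2)) (Real.exp (-β * ‖x - y‖ ^ 2)), mul_assoc,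
    ← Real.mul_rpow (by positivity) (by positivity)]
  rw [show π / (β + 2 * β) * (π / (8 * β / 3)) = π ^ 2 / (8 * β ^ 2) by field_simp; ring]
  ring
end

section
/- For β > 0, λ > 0 and x, y ∈ ℝ^d, the variance of the 3-hop count N₃ between x and y in the Poisson random-connection model on ℝ^d with intensity λ·dx and connection function H_β(u,v) = exp(-β‖u-v‖²) equals 2λ³(π³/(8β³))^{d/2} e^{-β‖x-y‖²/2} + λ²(π²/(3β²))^{d/2} e^{-β‖x-y‖²/3} + 2λ³(π³/(12β³))^{d/2} e^{-3β‖x-y‖²/4} + λ²(π²/(8β²))^{d/2} e^{-β‖x-y‖²}, given the identity Var[N₃] = 2∫ H_β(x,z)H^{(2)}(z,y)² λdz + 2∫ H_β(x,z)H^{(2)}(x,z)H^{(2)}(z,y)H_β(z,y) λdz + ∫∫ H_β(x,z₁)H_β(z₁,z₂)H_β(z₂,y)H_β(x,z₂)H_β(z₁,y) λ²dz₁dz₂ + H^{(3)}(x,y), where H^{(2)}(u,v) = λ∫H_β(u,w)H_β(w,v)dw and H^{(3)}(u,v) = λ²∫∫H_β(u,w₁)H_β(w₁,w₂)H_β(w₂,v)dw₁dw₂.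 -/
open MeasureTheory Real
open scoped RealInnerProductSpace

private lemma sq_complete {d : ℕ} (a b : ℝ) (ha : 0 < a) (hb : 0 < b)
    (u v w : EuclideanSpace ℝ (Fin d)) :
    a * ‖u - w‖ ^ 2 + b * ‖w - v‖ ^ 2 =
      (a + b) * ‖w - ((a / (a + b)) • u + (b / (a + b)) • v)‖ ^ 2 +
        (a * b / (a + b)) * ‖u - v‖ ^ 2 := by
  have hab : a + b ≠ 0 := by positivity
  rw [@norm_sub_sq_real, @norm_sub_sq_real, @norm_sub_sq_real, @norm_sub_sq_real]
  rw [← @real_inner_self_eq_norm_sq _ _ _ ((a / (a + b)) • u + (b / (a + b)) • v)]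
  simp only [inner_add_left, inner_add_right, real_inner_smul_left, real_inner_smul_right,
    real_inner_self_eq_norm_sq, real_inner_comm u v, real_inner_comm u w, real_inner_comm v w,
    norm_smul, Real.norm_eq_abs, mul_pow, sq_abs]
  field_simp
  ring

private lemma mid_sq {d : ℕ} (a : ℝ) (ha : 0 < a) (u v z : EuclideanSpace ℝ (Fin d)) :
    a * ‖u - z‖ ^ 2 + a * ‖z - v‖ ^ 2 =
      (2 * a) * ‖z - (((1:ℝ)/2) • u + ((1:ℝ)/2) • v)‖ ^ 2 + (a / 2) * ‖u - v‖ ^ 2 := by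
  have h := sq_complete a a ha ha u v z
  have h2 : a / (a + a) = 1/2 := by
    rw [div_eq_div_iff (by positivity) (by norm_num)]; ring
  have h3 : a * a / (a + a) = a / 2 := by
    rw [div_eq_div_iff (by positivity) (by norm_num)]; ring
  rw [h2, h3, show a + a = 2*a by ring] at h
  exact h

private lemma integrable_gauss {d : ℕ} (b : ℝ) (hb : 0 < b) :
    Integrable (fun w : EuclideanSpace ℝ (Fin d) => rexp (-b * ‖w‖ ^ 2)) := by
  have h := (GaussianFourier.integrable_cexp_neg_mul_sq_norm_add
    (V := EuclideanSpace ℝ (Fin d)) (b := (b : ℂ)) (by simpa using hb) 0 0).norm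
  simpa [Complex.norm_exp, ← Complex.ofReal_pow] using h

private lemma integrable_gauss' {d : ℕ} (b : ℝ) (hb : 0 < b) (c : EuclideanSpace ℝ (Fin d)) :
    Integrable (fun w : EuclideanSpace ℝ (Fin d) => rexp (-b * ‖c - w‖ ^ 2)) := by
  have h := (integrable_gauss b hb (d := d)).comp_sub_right c
  simp only [norm_sub_rev _ c] at h
  exact h

private lemma gauss_integral {d : ℕ} (b : ℝ) (hb : 0 < b) (c : EuclideanSpace ℝ (Fin d)) :
    ∫ w : EuclideanSpace ℝ (Fin d), rexp (-b * ‖w - c‖ ^ 2)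
      = (π / b) ^ ((d : ℝ) / 2) := by
  rw [integral_sub_right_eq_self (fun w : EuclideanSpace ℝ (Fin d) => rexp (-b * ‖w‖ ^ 2)) c]
  rw [GaussianFourier.integral_rexp_neg_mul_sq_norm hb]
  norm_num

private lemma conv_gauss {d : ℕ} (a b : ℝ) (ha : 0 < a) (hb : 0 < b)
    (u v : EuclideanSpace ℝ (Fin d)) :
    (∫ w : EuclideanSpace ℝ (Fin d), rexp (-a * ‖u - w‖ ^ 2) * rexp (-b * ‖w - v‖ ^ 2))
      = (π / (a + b)) ^ ((d : ℝ) / 2) * rexp (-(a * b / (a + b)) * ‖u - v‖ ^ 2) := by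
  have key : ∀ w : EuclideanSpace ℝ (Fin d),
      rexp (-a * ‖u - w‖ ^ 2) * rexp (-b * ‖w - v‖ ^ 2)
        = rexp (-(a + b) * ‖w - ((a / (a + b)) • u + (b / (a + b)) • v)‖ ^ 2) *
            rexp (-(a * b / (a + b)) * ‖u - v‖ ^ 2) := by
    intro w
    rw [← Real.exp_add, ← Real.exp_add]
    congr 1
    have := sq_complete a b ha hb u v w
    nlinarith [this]
  simp_rw [key]
  rw [integral_mul_const, gauss_integral (a + b) (by positivity)]

private lemma conv_gauss' {d : ℕ} (a b s c : ℝ) (ha : 0 < a) (hb : 0 < b)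
    (hs : a + b = s) (hc : a * b / (a + b) = c) (u v : EuclideanSpace ℝ (Fin d)) :
    (∫ w : EuclideanSpace ℝ (Fin d), rexp (-a * ‖u - w‖ ^ 2) * rexp (-b * ‖w - v‖ ^ 2))
      = (π / s) ^ ((d : ℝ) / 2) * rexp (-c * ‖u - v‖ ^ 2) := by
  subst hs hc; exact conv_gauss a b ha hb u v

private lemma gauss_le_one (b t : ℝ) (hb : 0 < b) : rexp (-b * t ^ 2) ≤ 1 := by
  calc rexp (-b * t ^ 2) ≤ rexp 0 := Real.exp_le_exp.mpr (by nlinarith [sq_nonneg t])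
  _ = 1 := Real.exp_zero

set_option maxHeartbeats 2000000 in
/-- Corollary 5.3 of the paper: the variance of the `3`-hop count between `x` and `y`
in the Poisson random-connection model on `ℝ^d` with intensity `λ·dx` and Rayleigh
fading `H_β(u,v) = exp(-β‖u-v‖²)`, given its integral decomposition
(equation (4.3)), has the stated closed form. -/
theorem variance_three_hop_count (d : ℕ) (β lam : ℝ) (hβ : 0 < β) (hlam : 0 < lam)
    (x y : EuclideanSpace ℝ (Fin d))
    (H2 H3 : EuclideanSpace ℝ (Fin d) → EuclideanSpace ℝ (Fin d) → ℝ)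
    (hH2 : ∀ u v, H2 u v =
      lam * ∫ w : EuclideanSpace ℝ (Fin d),
        Real.exp (-β * ‖u - w‖ ^ 2) * Real.exp (-β * ‖w - v‖ ^ 2))
    (hH3 : ∀ u v, H3 u v =
      lam ^ 2 * ∫ w : EuclideanSpace ℝ (Fin d) × EuclideanSpace ℝ (Fin d),
        Real.exp (-β * ‖u - w.1‖ ^ 2) * Real.exp (-β * ‖w.1 - w.2‖ ^ 2) *
          Real.exp (-β * ‖w.2 - v‖ ^ 2))
    (V : ℝ)
    (hV : V =
      2 * (lam * ∫ z : EuclideanSpace ℝ (Fin d),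
          Real.exp (-β * ‖x - z‖ ^ 2) * (H2 z y) ^ 2) +
        2 * (lam * ∫ z : EuclideanSpace ℝ (Fin d),
          Real.exp (-β * ‖x - z‖ ^ 2) * H2 x z * H2 z y * Real.exp (-β * ‖z - y‖ ^ 2)) +
        lam ^ 2 * (∫ z : EuclideanSpace ℝ (Fin d) × EuclideanSpace ℝ (Fin d),
          Real.exp (-β * ‖x - z.1‖ ^ 2) * Real.exp (-β * ‖z.1 - z.2‖ ^ 2) *
            Real.exp (-β * ‖z.2 - y‖ ^ 2) * Real.exp (-β * ‖x - z.2‖ ^ 2) *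
            Real.exp (-β * ‖z.1 - y‖ ^ 2)) +
        H3 x y) :
    V = 2 * lam ^ 3 * (Real.pi ^ 3 / (8 * β ^ 3)) ^ ((d : ℝ) / 2) *
          Real.exp (-β * ‖x - y‖ ^ 2 / 2) +
        lam ^ 2 * (Real.pi ^ 2 / (3 * β ^ 2)) ^ ((d : ℝ) / 2) *
          Real.exp (-β * ‖x - y‖ ^ 2 / 3) +
        2 * lam ^ 3 * (Real.pi ^ 3 / (12 * β ^ 3)) ^ ((d : ℝ) / 2) *
          Real.exp (-3 * β * ‖x - y‖ ^ 2 / 4) +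
        lam ^ 2 * (Real.pi ^ 2 / (8 * β ^ 2)) ^ ((d : ℝ) / 2) *
          Real.exp (-β * ‖x - y‖ ^ 2) := by
  set K : ℝ := (π / (2*β)) ^ ((d : ℝ) / 2) with hK
  have hKpos : 0 < K := by
    apply Real.rpow_pos_of_pos; positivity
  -- closed form of H2
  have H2eq : ∀ u v : EuclideanSpace ℝ (Fin d), H2 u v = lam * (K * rexp (-(β/2) * ‖u - v‖ ^ 2)) := by
    intro u v
    rw [hH2, conv_gauss' β β (2*β) (β/2) hβ hβ (by ring)
      (by rw [div_eq_div_iff (by positivity) (by norm_num)]; ring) u v]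
  -- integrability of translated Gaussians
  have hfx : Integrable (fun w : EuclideanSpace ℝ (Fin d) => rexp (-β * ‖x - w‖ ^ 2)) := integrable_gauss' β hβ x
  have hgy : Integrable (fun w : EuclideanSpace ℝ (Fin d) => rexp (-β * ‖w - y‖ ^ 2)) := by
    simpa [norm_sub_rev] using integrable_gauss' β hβ y
  -- Term 1
  have hT1 : (∫ z : EuclideanSpace ℝ (Fin d), rexp (-β * ‖x - z‖ ^ 2) * (H2 z y) ^ 2)
      = lam ^ 2 * (π ^ 3 / (8 * β ^ 3)) ^ ((d : ℝ) / 2) * rexp (-β * ‖x - y‖ ^ 2 / 2) := by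
    have e1 : ∀ z : EuclideanSpace ℝ (Fin d), rexp (-β * ‖x - z‖ ^ 2) * (H2 z y) ^ 2
        = (lam ^ 2 * K ^ 2) * (rexp (-β * ‖x - z‖ ^ 2) * rexp (-β * ‖z - y‖ ^ 2)) := by
      intro z
      rw [H2eq, show rexp (-β * ‖z - y‖ ^ 2)
        = rexp (-(β/2) * ‖z - y‖ ^ 2) * rexp (-(β/2) * ‖z - y‖ ^ 2) by
          rw [← Real.exp_add]; congr 1; ring]
      ring
    simp_rw [e1]
    rw [integral_const_mul, conv_gauss' β β (2*β) (β/2) hβ hβ (by ring)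
      (by rw [div_eq_div_iff (by positivity) (by norm_num)]; ring) x y]
    have hmerge : K ^ 2 * K = (π ^ 3 / (8 * β ^ 3)) ^ ((d : ℝ) / 2) := by
      rw [hK, sq, ← Real.mul_rpow (by positivity) (by positivity),
        ← Real.mul_rpow (by positivity) (by positivity)]
      congr 1; field_simp; ring
    rw [show rexp (-(β/2) * ‖x - y‖ ^ 2) = rexp (-β * ‖x - y‖ ^ 2 / 2) by congr 1; ring]
    linear_combination (lam ^ 2 * rexp (-β * ‖x - y‖ ^ 2 / 2)) * hmerge
  -- Term 2
  have hT2 : (∫ z : EuclideanSpace ℝ (Fin d), rexp (-β * ‖x - z‖ ^ 2) * H2 x z * H2 z y * rexp (-β * ‖z - y‖ ^ 2))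
      = lam ^ 2 * (π ^ 3 / (12 * β ^ 3)) ^ ((d : ℝ) / 2) * rexp (-3 * β * ‖x - y‖ ^ 2 / 4) := by
    have e2 : ∀ z : EuclideanSpace ℝ (Fin d), rexp (-β * ‖x - z‖ ^ 2) * H2 x z * H2 z y * rexp (-β * ‖z - y‖ ^ 2)
        = (lam ^ 2 * K ^ 2) * (rexp (-(3*β/2) * ‖x - z‖ ^ 2) * rexp (-(3*β/2) * ‖z - y‖ ^ 2)) := by
      intro z
      rw [H2eq, H2eq,
        show rexp (-(3*β/2) * ‖x - z‖ ^ 2)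
          = rexp (-β * ‖x - z‖ ^ 2) * rexp (-(β/2) * ‖x - z‖ ^ 2) by
            rw [← Real.exp_add]; congr 1; ring,
        show rexp (-(3*β/2) * ‖z - y‖ ^ 2)
          = rexp (-β * ‖z - y‖ ^ 2) * rexp (-(β/2) * ‖z - y‖ ^ 2) by
            rw [← Real.exp_add]; congr 1; ring]
      ring
    simp_rw [e2]
    rw [integral_const_mul, conv_gauss' (3*β/2) (3*β/2) (3*β) (3*β/4)
      (by positivity) (by positivity) (by ring)
      (by rw [div_eq_div_iff (by positivity) (by norm_num)]; ring) x y]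
    have hmerge : K ^ 2 * (π / (3*β)) ^ ((d : ℝ) / 2)
        = (π ^ 3 / (12 * β ^ 3)) ^ ((d : ℝ) / 2) := by
      rw [hK, sq, ← Real.mul_rpow (by positivity) (by positivity),
        ← Real.mul_rpow (by positivity) (by positivity)]
      congr 1; field_simp; ring
    rw [show rexp (-(3*β/4) * ‖x - y‖ ^ 2) = rexp (-3 * β * ‖x - y‖ ^ 2 / 4) by congr 1; ring]
    linear_combination (lam ^ 2 * rexp (-3 * β * ‖x - y‖ ^ 2 / 4)) * hmerge
  -- midpoint
  set m : EuclideanSpace ℝ (Fin d) := ((1:ℝ)/2) • x + ((1:ℝ)/2) • y with hm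
  -- Term 3
  have hT3 : (∫ z : EuclideanSpace ℝ (Fin d) × EuclideanSpace ℝ (Fin d),
        rexp (-β * ‖x - z.1‖ ^ 2) * rexp (-β * ‖z.1 - z.2‖ ^ 2) *
          rexp (-β * ‖z.2 - y‖ ^ 2) * rexp (-β * ‖x - z.2‖ ^ 2) * rexp (-β * ‖z.1 - y‖ ^ 2))
      = (π ^ 2 / (8 * β ^ 2)) ^ ((d : ℝ) / 2) * rexp (-β * ‖x - y‖ ^ 2) := by
    set f : EuclideanSpace ℝ (Fin d) × EuclideanSpace ℝ (Fin d) → ℝ := fun z =>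
      rexp (-β * ‖x - z.1‖ ^ 2) * rexp (-β * ‖z.1 - z.2‖ ^ 2) *
        rexp (-β * ‖z.2 - y‖ ^ 2) * rexp (-β * ‖x - z.2‖ ^ 2) * rexp (-β * ‖z.1 - y‖ ^ 2)
      with hf
    have hbound : Integrable (fun z : EuclideanSpace ℝ (Fin d) × EuclideanSpace ℝ (Fin d) =>
        rexp (-β * ‖x - z.1‖ ^ 2) * rexp (-β * ‖x - z.2‖ ^ 2)) (volume) := by
      rw [Measure.volume_eq_prod]
      exact hfx.mul_prod hfx
    have hcont : Continuous f := by fun_prop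
    have hint : Integrable f := by
      refine hbound.mono hcont.aestronglyMeasurable (ae_of_all _ fun z => ?_)
      rw [Real.norm_eq_abs, Real.norm_eq_abs, abs_of_nonneg (by positivity),
        abs_of_nonneg (by positivity)]
      have h1 := gauss_le_one β ‖z.1 - z.2‖ hβ
      have h2 := gauss_le_one β ‖z.2 - y‖ hβ
      have h3 := gauss_le_one β ‖z.1 - y‖ hβ
      have p1 := Real.exp_pos (-β * ‖x - z.1‖ ^ 2)
      have p2 := Real.exp_pos (-β * ‖x - z.2‖ ^ 2)
      have p3 := Real.exp_pos (-β * ‖z.1 - z.2‖ ^ 2)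
      have p4 := Real.exp_pos (-β * ‖z.2 - y‖ ^ 2)
      have p5 := Real.exp_pos (-β * ‖z.1 - y‖ ^ 2)
      calc f z = (rexp (-β * ‖x - z.1‖ ^ 2) * rexp (-β * ‖x - z.2‖ ^ 2)) *
          (rexp (-β * ‖z.1 - z.2‖ ^ 2) * rexp (-β * ‖z.2 - y‖ ^ 2) *
            rexp (-β * ‖z.1 - y‖ ^ 2)) := by rw [hf]; ring
      _ ≤ (rexp (-β * ‖x - z.1‖ ^ 2) * rexp (-β * ‖x - z.2‖ ^ 2)) * 1 := by
          apply mul_le_mul_of_nonneg_left _ (by positivity)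
          have h12 : rexp (-β * ‖z.1 - z.2‖ ^ 2) * rexp (-β * ‖z.2 - y‖ ^ 2) ≤ 1 := by nlinarith
          nlinarith
      _ = rexp (-β * ‖x - z.1‖ ^ 2) * rexp (-β * ‖x - z.2‖ ^ 2) := by ring
    rw [show (volume : Measure (EuclideanSpace ℝ (Fin d) × EuclideanSpace ℝ (Fin d))) = (volume : Measure (EuclideanSpace ℝ (Fin d))).prod volume from
      Measure.volume_eq_prod _ _, integral_prod _ (by rwa [← Measure.volume_eq_prod _ _])]
    dsimp only
    have step1 : ∀ z₁ z₂ : EuclideanSpace ℝ (Fin d),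
        rexp (-β * ‖x - z₁‖ ^ 2) * rexp (-β * ‖z₁ - z₂‖ ^ 2) *
          rexp (-β * ‖z₂ - y‖ ^ 2) * rexp (-β * ‖x - z₂‖ ^ 2) * rexp (-β * ‖z₁ - y‖ ^ 2)
        = (rexp (-β * ‖x - z₁‖ ^ 2) * rexp (-β * ‖z₁ - y‖ ^ 2) * rexp (-(β/2) * ‖x - y‖ ^ 2)) *
          (rexp (-β * ‖z₁ - z₂‖ ^ 2) * rexp (-(2*β) * ‖z₂ - m‖ ^ 2)) := by
      intro z₁ z₂
      simp only [← Real.exp_add]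
      congr 1
      have h := mid_sq β hβ x y z₂
      rw [← hm] at h
      linarith
    simp_rw [step1, integral_const_mul,
      conv_gauss' β (2*β) (3*β) (2*β/3) hβ (by positivity) (by ring)
        (by rw [div_eq_div_iff (by positivity) (by norm_num)]; ring)]
    have step2 : ∀ z₁ : EuclideanSpace ℝ (Fin d),
        rexp (-β * ‖x - z₁‖ ^ 2) * rexp (-β * ‖z₁ - y‖ ^ 2) * rexp (-(β/2) * ‖x - y‖ ^ 2) *
          ((π / (3*β)) ^ ((d : ℝ) / 2) * rexp (-(2*β/3) * ‖z₁ - m‖ ^ 2))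
        = ((π / (3*β)) ^ ((d : ℝ) / 2) * rexp (-β * ‖x - y‖ ^ 2)) *
            rexp (-(8*β/3) * ‖z₁ - m‖ ^ 2) := by
      intro z₁
      rw [show rexp (-β * ‖x - z₁‖ ^ 2) * rexp (-β * ‖z₁ - y‖ ^ 2) *
            rexp (-(β/2) * ‖x - y‖ ^ 2) *
            ((π / (3*β)) ^ ((d : ℝ) / 2) * rexp (-(2*β/3) * ‖z₁ - m‖ ^ 2))
          = (π / (3*β)) ^ ((d : ℝ) / 2) *
            (rexp (-β * ‖x - z₁‖ ^ 2) * rexp (-β * ‖z₁ - y‖ ^ 2) *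
              rexp (-(β/2) * ‖x - y‖ ^ 2) * rexp (-(2*β/3) * ‖z₁ - m‖ ^ 2)) by ring]
      rw [show ((π / (3*β)) ^ ((d : ℝ) / 2) * rexp (-β * ‖x - y‖ ^ 2)) *
            rexp (-(8*β/3) * ‖z₁ - m‖ ^ 2)
          = (π / (3*β)) ^ ((d : ℝ) / 2) *
            (rexp (-β * ‖x - y‖ ^ 2) * rexp (-(8*β/3) * ‖z₁ - m‖ ^ 2)) by ring]
      congr 1
      simp only [← Real.exp_add]
      congr 1
      have h := mid_sq β hβ x y z₁
      rw [← hm] at h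
      linarith
    simp_rw [step2, integral_const_mul, gauss_integral (8*β/3) (by positivity) m]
    have hmerge : (π / (3*β)) ^ ((d : ℝ) / 2) * (π / (8*β/3)) ^ ((d : ℝ) / 2)
        = (π ^ 2 / (8 * β ^ 2)) ^ ((d : ℝ) / 2) := by
      rw [← Real.mul_rpow (by positivity) (by positivity)]
      congr 1; field_simp
    linear_combination rexp (-β * ‖x - y‖ ^ 2) * hmerge
  -- H3
  have hH3' : H3 x y = lam ^ 2 * (π ^ 2 / (3 * β ^ 2)) ^ ((d : ℝ) / 2) *
      rexp (-β * ‖x - y‖ ^ 2 / 3) := by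
    rw [hH3]
    set g : EuclideanSpace ℝ (Fin d) × EuclideanSpace ℝ (Fin d) → ℝ := fun w =>
      rexp (-β * ‖x - w.1‖ ^ 2) * rexp (-β * ‖w.1 - w.2‖ ^ 2) * rexp (-β * ‖w.2 - y‖ ^ 2)
      with hg
    have hbound : Integrable (fun w : EuclideanSpace ℝ (Fin d) × EuclideanSpace ℝ (Fin d) =>
        rexp (-β * ‖x - w.1‖ ^ 2) * rexp (-β * ‖w.2 - y‖ ^ 2)) (volume) := by
      rw [Measure.volume_eq_prod]
      exact hfx.mul_prod hgy
    have hcont : Continuous g := by fun_prop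
    have hint : Integrable g := by
      refine hbound.mono hcont.aestronglyMeasurable (ae_of_all _ fun w => ?_)
      rw [Real.norm_eq_abs, Real.norm_eq_abs, abs_of_nonneg (by positivity),
        abs_of_nonneg (by positivity)]
      have h1 := gauss_le_one β ‖w.1 - w.2‖ hβ
      have p1 := Real.exp_pos (-β * ‖x - w.1‖ ^ 2)
      have p4 := Real.exp_pos (-β * ‖w.2 - y‖ ^ 2)
      calc g w = (rexp (-β * ‖x - w.1‖ ^ 2) * rexp (-β * ‖w.2 - y‖ ^ 2)) *
          rexp (-β * ‖w.1 - w.2‖ ^ 2) := by rw [hg]; ring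
      _ ≤ (rexp (-β * ‖x - w.1‖ ^ 2) * rexp (-β * ‖w.2 - y‖ ^ 2)) * 1 := by
          apply mul_le_mul_of_nonneg_left h1 (by positivity)
      _ = rexp (-β * ‖x - w.1‖ ^ 2) * rexp (-β * ‖w.2 - y‖ ^ 2) := by ring
    rw [show (volume : Measure (EuclideanSpace ℝ (Fin d) × EuclideanSpace ℝ (Fin d))) = (volume : Measure (EuclideanSpace ℝ (Fin d))).prod volume from
      Measure.volume_eq_prod _ _, integral_prod _ (by rwa [← Measure.volume_eq_prod _ _])]
    dsimp only
    have step1 : ∀ w₁ w₂ : EuclideanSpace ℝ (Fin d),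
        rexp (-β * ‖x - w₁‖ ^ 2) * rexp (-β * ‖w₁ - w₂‖ ^ 2) * rexp (-β * ‖w₂ - y‖ ^ 2)
        = rexp (-β * ‖x - w₁‖ ^ 2) *
            (rexp (-β * ‖w₁ - w₂‖ ^ 2) * rexp (-β * ‖w₂ - y‖ ^ 2)) := by
      intro w₁ w₂; ring
    simp_rw [step1, integral_const_mul,
      conv_gauss' β β (2*β) (β/2) hβ hβ (by ring)
        (by rw [div_eq_div_iff (by positivity) (by norm_num)]; ring)]
    have step2 : ∀ w₁ : EuclideanSpace ℝ (Fin d),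
        rexp (-β * ‖x - w₁‖ ^ 2) *
          ((π / (2*β)) ^ ((d : ℝ) / 2) * rexp (-(β/2) * ‖w₁ - y‖ ^ 2))
        = (π / (2*β)) ^ ((d : ℝ) / 2) *
            (rexp (-β * ‖x - w₁‖ ^ 2) * rexp (-(β/2) * ‖w₁ - y‖ ^ 2)) := by
      intro w₁; ring
    simp_rw [step2, integral_const_mul,
      conv_gauss' β (β/2) (3*β/2) (β/3) hβ (by positivity) (by ring)
        (by rw [div_eq_div_iff (by positivity) (by norm_num)]; ring)]
    have hmerge : (π / (2*β)) ^ ((d : ℝ) / 2) * (π / (3*β/2)) ^ ((d : ℝ) / 2)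
        = (π ^ 2 / (3 * β ^ 2)) ^ ((d : ℝ) / 2) := by
      rw [← Real.mul_rpow (by positivity) (by positivity)]
      congr 1; field_simp
    rw [show rexp (-(β/3) * ‖x - y‖ ^ 2) = rexp (-β * ‖x - y‖ ^ 2 / 3) by congr 1; ring]
    linear_combination (lam ^ 2 * rexp (-β * ‖x - y‖ ^ 2 / 3)) * hmerge
  rw [hV, hT1, hT2, hT3, hH3']
  ring
end
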